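/- Let λ > 0 and f : ℝⁿ → ℝ be given by f(x) = λ‖x‖₁ + ½‖x‖₂². Then f is strongly convex with constant 1, its Fenchel conjugate is f*(x*) = ½‖S_λ(x*)‖₂², and f* is differentiable with ∇f*(x*) = S_λ(x*), where S_λ(x) = max{|x| − λ, 0}·sign(x) is applied componentwise. -/

import Mathlib

open RealInnerProductSpace

noncomputable section

/-- The objective `f(x) = λ‖x‖₁ + ½‖x‖₂²` on Euclidean space. -/
def fE {n : ℕ} (lam : ℝ) (x : EuclideanSpace ℝ (Fin n)) : ℝ :=
  lam * (∑ j, |x j|) + ‖x‖ ^ 2 / 2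

/-- Componentwise soft shrinkage operator `S_λ(x) = max{|x| − λ, 0}·sign(x)`. -/
def softShrinkE {n : ℕ} (lam : ℝ) (x : EuclideanSpace ℝ (Fin n)) :
    EuclideanSpace ℝ (Fin n) :=
  WithLp.toLp 2 (fun j => Real.sign (x j) * max (|x j| - lam) 0)

/-- Fenchel conjugate `f*(x*) = sup_y ⟨x*, y⟩ − f(y)`. -/
def fEConj {n : ℕ} (lam : ℝ) (xs : EuclideanSpace ℝ (Fin n)) : ℝ :=
  sSup {t : ℝ | ∃ y : EuclideanSpace ℝ (Fin n), t = ⟪xs, y⟫ - fE lam y}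

lemma hasDerivAt_sqmax (t : ℝ) : HasDerivAt (fun t : ℝ => max t 0 ^ 2 / 2) (max t 0) t := by
  rcases lt_trichotomy t 0 with h | h | h
  · have he : (fun s : ℝ => max s 0 ^ 2 / 2) =ᶠ[nhds t] fun _ => (0:ℝ) := by
      filter_upwards [eventually_lt_nhds h] with s hs
      simp [max_eq_right hs.le]
    rw [max_eq_right h.le]
    exact (hasDerivAt_const t (0:ℝ)).congr_of_eventuallyEq he
  · subst h
    rw [max_self]
    rw [hasDerivAt_iff_isLittleO]
    simp only [zero_add, smul_zero, sub_zero, max_self, ne_eq, OfNat.ofNat_ne_zero,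
      not_false_eq_true, zero_pow, zero_div]
    rw [Asymptotics.isLittleO_iff]
    intro ε hε
    filter_upwards [Metric.eventually_nhds_iff.2 ⟨2*ε, by linarith, fun {y} hy => hy⟩] with s hs
    have h1 : max s 0 ≤ |s| := by
      rcases le_total s 0 with h' | h' <;>
        simp [max_eq_right, max_eq_left, h', abs_of_nonpos, abs_of_nonneg]
    have h2 : (0:ℝ) ≤ max s 0 := le_max_right _ _
    have hd : dist s 0 = |s| := by simp [Real.dist_eq]
    rw [hd] at hs
    have hsq : max s 0 ^ 2 ≤ |s| * |s| := by nlinarith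
    rw [Real.norm_eq_abs, Real.norm_eq_abs, abs_div,
      abs_of_nonneg (by positivity : (0:ℝ) ≤ max s 0 ^ 2), abs_two]
    nlinarith [abs_nonneg s]
  · have he : (fun s : ℝ => max s 0 ^ 2 / 2) =ᶠ[nhds t] fun s => s ^ 2 / 2 := by
      filter_upwards [eventually_gt_nhds h] with s hs
      simp [max_eq_left hs.le]
    rw [max_eq_left h.le]
    have hd : HasDerivAt (fun s : ℝ => s ^ 2 / 2) t t := by
      simpa using ((hasDerivAt_pow 2 t).div_const 2)
    exact hd.congr_of_eventuallyEq he

lemma s_eq {lam : ℝ} (hlam : 0 < lam) (a : ℝ) :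
    Real.sign a * max (|a| - lam) 0 = max (a - lam) 0 - max (-a - lam) 0 := by
  rcases lt_trichotomy a 0 with h | h | h
  · rw [Real.sign_of_neg h, abs_of_neg h, max_eq_right (show a - lam ≤ 0 by linarith)]
    ring
  · subst h
    simp [max_eq_right (show -(0:ℝ) - lam ≤ 0 by linarith),
      max_eq_right (show (0:ℝ) - lam ≤ 0 by linarith), max_eq_right (neg_nonpos.2 hlam.le)]
  · rw [Real.sign_of_pos h, abs_of_pos h, max_eq_right (show -a - lam ≤ 0 by linarith)]
    ring

lemma ssq_eq {lam : ℝ} (hlam : 0 < lam) (a : ℝ) :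
    (Real.sign a * max (|a| - lam) 0) ^ 2 = max (a - lam) 0 ^ 2 + max (-a - lam) 0 ^ 2 := by
  rw [s_eq hlam a]
  have h0 : max (a - lam) 0 * max (-a - lam) 0 = 0 := by
    rcases le_total a 0 with h | h
    · rw [max_eq_right (show a - lam ≤ 0 by linarith), zero_mul]
    · rw [max_eq_right (show -a - lam ≤ 0 by linarith), mul_zero]
  nlinarith [h0]

lemma scalar_bound {lam : ℝ} (hlam : 0 < lam) (a y : ℝ) :
    a * y - lam * |y| - y ^ 2 / 2 ≤ (Real.sign a * max (|a| - lam) 0) ^ 2 / 2 := by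
  have hs : (Real.sign a * max (|a| - lam) 0) ^ 2 = max (|a| - lam) 0 ^ 2 := by
    rcases lt_trichotomy a 0 with h | h | h
    · rw [Real.sign_of_neg h]; ring
    · subst h; simp [abs_zero, max_eq_right (show (0:ℝ) - lam ≤ 0 by linarith),
        max_eq_right (neg_nonpos.2 hlam.le)]
    · rw [Real.sign_of_pos h]; ring
  rw [hs]
  have h1 : a * y ≤ |a| * |y| := le_trans (le_abs_self _) (by rw [abs_mul])
  have h2 : (|a| - lam) * |y| ≤ max (|a| - lam) 0 * |y| :=
    mul_le_mul_of_nonneg_right (le_max_left _ _) (abs_nonneg y)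
  nlinarith [sq_nonneg (|y| - max (|a| - lam) 0), sq_abs y]

lemma scalar_attain {lam : ℝ} (hlam : 0 < lam) (a : ℝ) :
    a * (Real.sign a * max (|a| - lam) 0) - lam * |Real.sign a * max (|a| - lam) 0|
      - (Real.sign a * max (|a| - lam) 0) ^ 2 / 2
      = (Real.sign a * max (|a| - lam) 0) ^ 2 / 2 := by
  rcases lt_trichotomy a 0 with h | h | h
  · rw [Real.sign_of_neg h, abs_of_neg h]
    set m := max (-a - lam) 0 with hm
    have hm0 : 0 ≤ m := le_max_right _ _
    have hkey : m * (-a - lam) = m * m := by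
      rcases le_or_gt (-a - lam) 0 with h' | h'
      · rw [hm, max_eq_right h', mul_zero, zero_mul]
      · rw [hm, max_eq_left h'.le]
    rw [abs_of_nonpos (by nlinarith : -1 * m ≤ 0)]
    nlinarith
  · subst h; simp [abs_zero, max_eq_right (show (0:ℝ) - lam ≤ 0 by linarith),
      max_eq_right (neg_nonpos.2 hlam.le)]
  · rw [Real.sign_of_pos h, abs_of_pos h]
    set m := max (a - lam) 0 with hm
    have hm0 : 0 ≤ m := le_max_right _ _
    have hkey : m * (a - lam) = m * m := by
      rcases le_or_gt (a - lam) 0 with h' | h'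
      · rw [hm, max_eq_right h', mul_zero, zero_mul]
      · rw [hm, max_eq_left h'.le]
    rw [abs_of_nonneg (by nlinarith : 0 ≤ 1 * m)]
    nlinarith

lemma hasDerivAt_g {lam : ℝ} (hlam : 0 < lam) (a : ℝ) :
    HasDerivAt (fun a : ℝ => (Real.sign a * max (|a| - lam) 0) ^ 2 / 2)
      (Real.sign a * max (|a| - lam) 0) a := by
  have h1 : HasDerivAt (fun a : ℝ => max (a - lam) 0 ^ 2 / 2) (max (a - lam) 0) a := by
    have inner : HasDerivAt (fun a : ℝ => a - lam) 1 a := (hasDerivAt_id a).sub_const lam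
    simpa [Function.comp_def] using (hasDerivAt_sqmax (a - lam)).comp a inner
  have h2 : HasDerivAt (fun a : ℝ => max (-a - lam) 0 ^ 2 / 2) (-(max (-a - lam) 0)) a := by
    have inner : HasDerivAt (fun a : ℝ => -a - lam) (-1) a := ((hasDerivAt_id a).neg).sub_const lam
    simpa [Function.comp_def] using (hasDerivAt_sqmax (-a - lam)).comp a inner
  have h3 := h1.add h2
  have he : (fun a : ℝ => (Real.sign a * max (|a| - lam) 0) ^ 2 / 2) =
      fun a : ℝ => max (a - lam) 0 ^ 2 / 2 + max (-a - lam) 0 ^ 2 / 2 := by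
    funext b; rw [ssq_eq hlam b]; ring
  rw [he, s_eq hlam a, sub_eq_add_neg]
  exact h3

lemma hnormsq {n : ℕ} (x : EuclideanSpace ℝ (Fin n)) : ‖x‖ ^ 2 = ∑ j, (x j) ^ 2 := by
  rw [EuclideanSpace.norm_eq, Real.sq_sqrt (Finset.sum_nonneg fun j _ => by positivity)]
  simp [sq_abs]

lemma hinner {n : ℕ} (x y : EuclideanSpace ℝ (Fin n)) : ⟪x, y⟫ = ∑ j, x j * y j := by
  simp [PiLp.inner_apply, RCLike.inner_apply, conj_trivial]
  exact Finset.sum_congr rfl fun j _ => mul_comm _ _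

lemma hkey {n : ℕ} (lam : ℝ) (xs y : EuclideanSpace ℝ (Fin n)) :
    ⟪xs, y⟫ - fE lam y = ∑ j, (xs j * y j - lam * |y j| - (y j) ^ 2 / 2) := by
  rw [hinner, fE, hnormsq, Finset.sum_sub_distrib, Finset.sum_sub_distrib,
    ← Finset.mul_sum, ← Finset.sum_div]
  ring

lemma hSnorm {n : ℕ} (lam : ℝ) (xs : EuclideanSpace ℝ (Fin n)) :
    1 / 2 * ‖softShrinkE lam xs‖ ^ 2
      = ∑ j, (Real.sign (xs j) * max (|xs j| - lam) 0) ^ 2 / 2 := by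
  rw [hnormsq, Finset.mul_sum]
  exact Finset.sum_congr rfl fun j _ => by rw [softShrinkE, PiLp.toLp_apply]; ring

/-- `f(x) = λ‖x‖₁ + ½‖x‖₂²` is strongly convex with constant `1` (in the
subgradient sense), its Fenchel conjugate is `f*(x*) = ½‖S_λ(x*)‖₂²`, and `f*` is
differentiable with `∇f*(x*) = S_λ(x*)`. -/
theorem fObj_strongly_convex_conjugate_gradient {n : ℕ} (lam : ℝ) (hlam : 0 < lam) :
    (∀ x g y : EuclideanSpace ℝ (Fin n),
        (∀ z, fE lam x + ⟪g, z - x⟫ ≤ fE lam z) →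
        fE lam x + ⟪g, y - x⟫ + 1 / 2 * ‖y - x‖ ^ 2 ≤ fE lam y) ∧
    (∀ xs : EuclideanSpace ℝ (Fin n),
        fEConj lam xs = 1 / 2 * ‖softShrinkE lam xs‖ ^ 2) ∧
    (∀ xs : EuclideanSpace ℝ (Fin n),
        HasGradientAt (fEConj lam) (softShrinkE lam xs) xs) := by
  -- Part 2 first
  have part2 : ∀ xs : EuclideanSpace ℝ (Fin n),
      fEConj lam xs = 1 / 2 * ‖softShrinkE lam xs‖ ^ 2 := by
    intro xs
    have hub : ∀ t ∈ {t : ℝ | ∃ y : EuclideanSpace ℝ (Fin n), t = ⟪xs, y⟫ - fE lam y},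
        t ≤ 1 / 2 * ‖softShrinkE lam xs‖ ^ 2 := by
      rintro t ⟨y, rfl⟩
      rw [hkey, hSnorm]
      exact Finset.sum_le_sum fun j _ => scalar_bound hlam _ _
    have hmem : (1 / 2 * ‖softShrinkE lam xs‖ ^ 2)
        ∈ {t : ℝ | ∃ y : EuclideanSpace ℝ (Fin n), t = ⟪xs, y⟫ - fE lam y} := by
      refine ⟨softShrinkE lam xs, ?_⟩
      rw [hkey, hSnorm]
      exact Finset.sum_congr rfl fun j _ => by
        rw [← scalar_attain hlam (xs j)]
        simp [softShrinkE]
    exact le_antisymm (csSup_le ⟨_, hmem⟩ hub) (le_csSup ⟨_, hub⟩ hmem)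
  refine ⟨?_, part2, ?_⟩
  · -- strong convexity
    intro x g y hsub
    set A := ⟪g, y - x⟫ with hA
    have hxy : ‖y‖ ^ 2 = ‖x‖ ^ 2 + 2 * ⟪x, y - x⟫ + ‖y - x‖ ^ 2 := by
      have := norm_add_sq_real x (y - x)
      simpa using this
    have hmain : A ≤ lam * (∑ j, |y j|) - lam * (∑ j, |x j|) + ⟪x, y - x⟫ := by
      have hstep : ∀ t : ℝ, 0 < t → t ≤ 1 →
          A ≤ lam * (∑ j, |y j|) - lam * (∑ j, |x j|) + ⟪x, y - x⟫
            + t * (‖y - x‖ ^ 2 / 2) := by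
        intro t ht ht1
        have h := hsub (x + t • (y - x))
        have hi : ⟪g, (x + t • (y - x)) - x⟫ = t * A := by
          rw [hA]
          have : (x + t • (y - x)) - x = t • (y - x) := by abel
          rw [this, real_inner_smul_right]
        have hl1 : (∑ j, |(x + t • (y - x)) j|) ≤ (1 - t) * (∑ j, |x j|) + t * (∑ j, |y j|) := by
          rw [Finset.mul_sum, Finset.mul_sum, ← Finset.sum_add_distrib]
          refine Finset.sum_le_sum fun j _ => ?_
          have happ : (x + t • (y - x)) j = (1 - t) * x j + t * y j := by
            simp [PiLp.add_apply, PiLp.smul_apply, PiLp.sub_apply, smul_eq_mul]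
            ring
          rw [happ]
          calc |(1 - t) * x j + t * y j| ≤ |(1 - t) * x j| + |t * y j| := abs_add_le _ _
            _ = (1 - t) * |x j| + t * |y j| := by
                rw [abs_mul, abs_mul, abs_of_nonneg (by linarith), abs_of_nonneg ht.le]
        have hn : ‖x + t • (y - x)‖ ^ 2
            = ‖x‖ ^ 2 + 2 * (t * ⟪x, y - x⟫) + t ^ 2 * ‖y - x‖ ^ 2 := by
          rw [norm_add_sq_real, real_inner_smul_right, norm_smul]
          simp [mul_pow, sq_abs]
        rw [fE, fE, hi, hn] at h
        have ht2 : t ^ 2 ≤ t := by nlinarith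
        have hlam' := hlam.le
        have hne : lam * (∑ j, |(x + t • (y - x)) j|)
            ≤ lam * ((1 - t) * (∑ j, |x j|) + t * (∑ j, |y j|)) :=
          mul_le_mul_of_nonneg_left hl1 hlam'
        nlinarith [h, hne, sq_nonneg (‖y - x‖), norm_nonneg (y - x)]
      rcases eq_or_lt_of_le (by positivity : (0:ℝ) ≤ ‖y - x‖ ^ 2 / 2) with hC | hC
      · have := hstep 1 one_pos le_rfl
        rw [← hC] at this
        linarith
      · apply le_of_forall_pos_le_add
        intro ε hε
        set C := ‖y - x‖ ^ 2 / 2 with hCdef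
        have htpos : 0 < min 1 (ε / C) := lt_min one_pos (div_pos hε hC)
        have := hstep (min 1 (ε / C)) htpos (min_le_left _ _)
        have h2 : min 1 (ε / C) * C ≤ ε := by
          have : min 1 (ε / C) ≤ ε / C := min_le_right _ _
          calc min 1 (ε / C) * C ≤ (ε / C) * C := mul_le_mul_of_nonneg_right this hC.le
            _ = ε := by field_simp
        linarith
    rw [fE, fE, hxy]
    linarith
  · -- gradient
    intro xs
    have hfun : fEConj lam
        = fun x : EuclideanSpace ℝ (Fin n) =>
            ∑ j, (Real.sign (x j) * max (|x j| - lam) 0) ^ 2 / 2 := by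
      funext x
      rw [part2 x, hSnorm]
    rw [hasGradientAt_iff_hasFDerivAt, hfun]
    have hterm : ∀ j ∈ Finset.univ, HasFDerivAt
        (fun x : EuclideanSpace ℝ (Fin n) => (Real.sign (x j) * max (|x j| - lam) 0) ^ 2 / 2)
        ((Real.sign (xs j) * max (|xs j| - lam) 0) • (EuclideanSpace.proj j : EuclideanSpace ℝ (Fin n) →L[ℝ] ℝ))
        xs := by
      intro j _
      have hp : HasFDerivAt (fun x : EuclideanSpace ℝ (Fin n) => x j)
          ((EuclideanSpace.proj j : EuclideanSpace ℝ (Fin n) →L[ℝ] ℝ)) xs :=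
        (EuclideanSpace.proj (𝕜 := ℝ) j).hasFDerivAt
      exact (hasDerivAt_g hlam (xs j)).comp_hasFDerivAt xs hp
    have hsum := HasFDerivAt.fun_sum hterm
    refine hsum.congr_fderiv ?_
    apply ContinuousLinearMap.ext
    intro v
    rw [InnerProductSpace.toDual_apply_apply, hinner]
    simp [softShrinkE, ContinuousLinearMap.sum_apply, ContinuousLinearMap.smul_apply]
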